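/- In the mapping class group of the four-holed sphere Σ₀⁴, with d'_1, d'_2 the two simple closed curves of Lemma 7.3 and d'_{2k+i} = (κ'')^k(d'_i) for i,k ∈ {1,2} where κ'' is the 2π/3-rotation, one has t_{d'_1}² t_{d'_2}² ⋯ t_{d'_6}² = t_{δ₁}⁴ t_{δ₂}⁴ t_{δ₃}⁴ t_{δ₄}⁴, where δ₁,…,δ₄ are the boundary-parallel curves; moreover this follows formally from the four lantern relations t_{d'_1}t_{d'_2}t_{d'_6} = t_{d'_2}t_{d'_3}t_{d'_4} = t_{d'_4}t_{d'_5}t_{d'_6} = t_{d'_2}t_{d'_4}t_{d'_6} = t_{δ₁}t_{δ₂}t_{δ₃}t_{δ₄} together with the fact that each t_{δ_i} is central. -/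
import Mathlib

private lemma key {G : Type*} [Group G] (a b c Δ : G)
    (hΔ : ∀ g : G, Δ * g = g * Δ) (h : a * b * c = Δ) :
    (Δ * c⁻¹ * a⁻¹) ^ 2 * a ^ 2 * (a⁻¹ * Δ * b⁻¹) ^ 2 * b ^ 2 *
      (b⁻¹ * Δ * c⁻¹) ^ 2 * c ^ 2 = Δ ^ 4 := by
  have hL : ∀ g k : G, g * (Δ * k) = Δ * (g * k) := by
    intro g k
    rw [← mul_assoc, ← hΔ, mul_assoc]
  have hT : ∀ g : G, g * Δ = Δ * g := fun g => (hΔ g).symm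
  have hinvT : ∀ g : G, g * Δ⁻¹ = Δ⁻¹ * g := by
    intro g
    have := congrArg (·⁻¹) (hΔ g⁻¹)
    simpa [mul_inv_rev] using this
  have hinvL : ∀ g k : G, g * (Δ⁻¹ * k) = Δ⁻¹ * (g * k) := by
    intro g k
    rw [← mul_assoc, hinvT, mul_assoc]
  have hinv : a⁻¹ * (c⁻¹ * b⁻¹) = Δ⁻¹ := by
    have hbca : b * c * a = Δ := by
      calc b * c * a = a⁻¹ * (a * b * c) * a := by group
        _ = a⁻¹ * Δ * a := by rw [h]
        _ = a⁻¹ * a * Δ := by rw [mul_assoc, hΔ, mul_assoc]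
        _ = Δ := by group
    calc a⁻¹ * (c⁻¹ * b⁻¹) = (b * c * a)⁻¹ := by group
      _ = Δ⁻¹ := by rw [hbca]
  calc (Δ * c⁻¹ * a⁻¹) ^ 2 * a ^ 2 * (a⁻¹ * Δ * b⁻¹) ^ 2 * b ^ 2 *
      (b⁻¹ * Δ * c⁻¹) ^ 2 * c ^ 2
      = Δ * (Δ * (Δ * (Δ * (Δ * (Δ * (c⁻¹ * ((a⁻¹ * (c⁻¹ * b⁻¹)) *
          ((a⁻¹ * (c⁻¹ * b⁻¹)) * c)))))))) := by
        simp only [pow_two, mul_assoc, hL, hT]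
        group
    _ = Δ * (Δ * (Δ * (Δ * (Δ * (Δ * (c⁻¹ * (Δ⁻¹ * (Δ⁻¹ * c)))))))) := by
        rw [hinv]
    _ = Δ * Δ * Δ * Δ := by
        simp only [hinvL, hinvT]
        group
    _ = Δ ^ 4 := by rw [pow_succ, pow_succ, pow_succ, pow_one]

/-- Lemma 7.3: in the mapping class group of the four-holed sphere `Σ₀⁴`, writing
`x_i = t_{d'_i}` for the Dehn twists along the six curves `d'_1,…,d'_6` and
`d_j = t_{δ_j}` for the (central) boundary twists, the four lantern relations
`x₁x₂x₆ = x₂x₃x₄ = x₄x₅x₆ = x₂x₄x₆ = d₁d₂d₃d₄` formally imply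
`t_{d'_1}² ⋯ t_{d'_6}² = t_{δ₁}⁴ t_{δ₂}⁴ t_{δ₃}⁴ t_{δ₄}⁴`. -/
theorem lantern_consequence {G : Type*} [Group G]
    (x1 x2 x3 x4 x5 x6 d1 d2 d3 d4 : G)
    (hd1 : ∀ g : G, d1 * g = g * d1) (hd2 : ∀ g : G, d2 * g = g * d2)
    (hd3 : ∀ g : G, d3 * g = g * d3) (hd4 : ∀ g : G, d4 * g = g * d4)
    (h1 : x1 * x2 * x6 = d1 * d2 * d3 * d4)
    (h2 : x2 * x3 * x4 = d1 * d2 * d3 * d4)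
    (h3 : x4 * x5 * x6 = d1 * d2 * d3 * d4)
    (h4 : x2 * x4 * x6 = d1 * d2 * d3 * d4) :
    x1 ^ 2 * x2 ^ 2 * x3 ^ 2 * x4 ^ 2 * x5 ^ 2 * x6 ^ 2
      = d1 ^ 4 * d2 ^ 4 * d3 ^ 4 * d4 ^ 4 := by
  set Δ := d1 * d2 * d3 * d4 with hΔdef
  have hΔ : ∀ g : G, Δ * g = g * Δ := by
    intro g
    exact (Commute.mul_left (Commute.mul_left (Commute.mul_left
      (hd1 g) (hd2 g)) (hd3 g)) (hd4 g)).eq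
  have e1 : x1 = Δ * x6⁻¹ * x2⁻¹ := by rw [← h1]; group
  have e3 : x3 = x2⁻¹ * Δ * x4⁻¹ := by rw [← h2]; group
  have e5 : x5 = x4⁻¹ * Δ * x6⁻¹ := by rw [← h3]; group
  have c12 : Commute d1 d2 := hd1 d2
  have c13 : Commute d1 d3 := hd1 d3
  have c23 : Commute d2 d3 := hd2 d3
  have c4 : Commute (d1 * d2 * d3) d4 :=
    Commute.mul_left (Commute.mul_left (hd1 d4) (hd2 d4)) (hd3 d4)
  have rhs : d1 ^ 4 * d2 ^ 4 * d3 ^ 4 * d4 ^ 4 = Δ ^ 4 := by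
    rw [hΔdef, c4.mul_pow, (Commute.mul_left c13 c23).mul_pow, c12.mul_pow]
  rw [e1, e3, e5, rhs]
  exact key x2 x4 x6 Δ hΔ h4
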